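/- The norm of the 2×2 complex matrix Φ with entries φ₀₀, φ₀₁, φ₁₀, φ₁₁ equals sqrt((φ + sqrt(φ² − 4|ω|²))/2), where φ = |φ₀₀|² + |φ₀₁|² + |φ₁₀|² + |φ₁₁|² and ω = φ₀₀φ₁₁ − φ₀₁φ₁₀. -/

import Mathlib

private lemma key_sq_aux (p q r s x y : ℂ) :
    Complex.normSq (p*x + q*y) + Complex.normSq (r*x + s*y) =
      (Complex.normSq p + Complex.normSq r) * Complex.normSq x
        + (Complex.normSq q + Complex.normSq s) * Complex.normSq y
        + 2 * ((((starRingEnd ℂ) p * q + (starRingEnd ℂ) r * s) * (starRingEnd ℂ) x * y)).re := by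
  simp [Complex.normSq_apply, Complex.mul_re, Complex.mul_im, Complex.add_re, Complex.add_im]
  ring

private lemma key_det_aux (p q r s : ℂ) :
    (Complex.normSq p + Complex.normSq r) * (Complex.normSq q + Complex.normSq s) =
      Complex.normSq ((starRingEnd ℂ) p * q + (starRingEnd ℂ) r * s)
        + Complex.normSq (p*s - q*r) := by
  simp [Complex.normSq_apply, Complex.mul_re, Complex.mul_im, Complex.add_re, Complex.add_im,
    Complex.sub_re, Complex.sub_im]
  ring

private lemma key_apply (Φ : Matrix (Fin 2) (Fin 2) ℂ) (x : EuclideanSpace ℂ (Fin 2)) :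
    ‖Matrix.toEuclideanCLM (𝕜 := ℂ) Φ x‖^2 =
      (Complex.normSq (Φ 0 0) + Complex.normSq (Φ 1 0)) * Complex.normSq (x 0)
        + (Complex.normSq (Φ 0 1) + Complex.normSq (Φ 1 1)) * Complex.normSq (x 1)
        + 2 * ((((starRingEnd ℂ) (Φ 0 0) * Φ 0 1 + (starRingEnd ℂ) (Φ 1 0) * Φ 1 1)
            * (starRingEnd ℂ) (x 0) * x 1)).re := by
  have h0 : Matrix.toEuclideanCLM (𝕜 := ℂ) Φ x 0 = Φ 0 0 * x 0 + Φ 0 1 * x 1 := by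
    simpa [Matrix.mulVec, dotProduct, Fin.sum_univ_two] using
      congrFun (Matrix.ofLp_toEuclideanCLM Φ x) 0
  have h1 : Matrix.toEuclideanCLM (𝕜 := ℂ) Φ x 1 = Φ 1 0 * x 0 + Φ 1 1 * x 1 := by
    simpa [Matrix.mulVec, dotProduct, Fin.sum_univ_two] using
      congrFun (Matrix.ofLp_toEuclideanCLM Φ x) 1
  have hn : ‖Matrix.toEuclideanCLM (𝕜 := ℂ) Φ x‖^2 =
      Complex.normSq (Matrix.toEuclideanCLM (𝕜 := ℂ) Φ x 0)
        + Complex.normSq (Matrix.toEuclideanCLM (𝕜 := ℂ) Φ x 1) := by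
    rw [EuclideanSpace.norm_eq, Real.sq_sqrt (by positivity)]
    simp [Fin.sum_univ_two, Complex.sq_norm]
  rw [hn, h0, h1]
  simp [Complex.normSq_apply, Complex.mul_re, Complex.mul_im, Complex.add_re, Complex.add_im]
  ring

private lemma normx_apply (x : EuclideanSpace ℂ (Fin 2)) :
    ‖x‖^2 = Complex.normSq (x 0) + Complex.normSq (x 1) := by
  rw [EuclideanSpace.norm_eq, Real.sq_sqrt (by positivity)]
  simp [Fin.sum_univ_two, Complex.sq_norm]

set_option maxHeartbeats 1600000 in
private theorem norm_two_by_two_matrix_eq_aux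
    (Φ : Matrix (Fin 2) (Fin 2) ℂ)
    (φ : ℝ) (hφ : φ = ‖Φ 0 0‖ ^ 2 + ‖Φ 0 1‖ ^ 2 +
      ‖Φ 1 0‖ ^ 2 + ‖Φ 1 1‖ ^ 2)
    (ω : ℂ) (hω : ω = Φ 0 0 * Φ 1 1 - Φ 0 1 * Φ 1 0) :
    ‖Matrix.toEuclideanCLM (𝕜 := ℂ) Φ‖ =
      Real.sqrt ((φ + Real.sqrt (φ ^ 2 - 4 * ‖ω‖ ^ 2)) / 2) := by
  set a : ℝ := Complex.normSq (Φ 0 0) + Complex.normSq (Φ 1 0) with ha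
  set c : ℝ := Complex.normSq (Φ 0 1) + Complex.normSq (Φ 1 1) with hc
  set b : ℂ := (starRingEnd ℂ) (Φ 0 0) * Φ 0 1 + (starRingEnd ℂ) (Φ 1 0) * Φ 1 1 with hb
  have hφ' : φ = a + c := by rw [hφ, ha, hc]; simp [Complex.sq_norm]; ring
  have hdet : a * c = Complex.normSq b + Complex.normSq ω := by
    rw [ha, hc, hb, hω]; exact key_det_aux _ _ _ _
  rw [Complex.sq_norm, hφ']
  set nb : ℝ := Complex.normSq b with hnb
  set nω : ℝ := Complex.normSq ω with hnω
  have hbnn : 0 ≤ nb := Complex.normSq_nonneg b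
  have hDval : (a + c)^2 - 4 * nω = (a - c)^2 + 4 * nb := by linear_combination 4 * hdet
  have hD0 : 0 ≤ (a + c)^2 - 4 * nω := by
    rw [hDval]; nlinarith [sq_nonneg (a - c)]
  set s : ℝ := Real.sqrt ((a + c)^2 - 4 * nω) with hs
  have hsq : s^2 = (a + c)^2 - 4 * nω := Real.sq_sqrt hD0
  have habssq : |a - c| ≤ s := by
    rw [hs, ← Real.sqrt_sq_eq_abs]
    exact Real.sqrt_le_sqrt (by nlinarith)
  set lam : ℝ := ((a + c) + s) / 2 with hlam
  have hla : a ≤ lam := by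
    have h1 := le_abs_self (a - c)
    have h2 := neg_abs_le (a - c)
    rw [hlam]; linarith
  have hlc : c ≤ lam := by
    have h1 := le_abs_self (a - c)
    have h2 := neg_abs_le (a - c)
    rw [hlam]; linarith
  have hroot : (lam - a) * (lam - c) = nb := by
    rw [hlam]; linear_combination hsq / 4 + hdet
  have ha0 : (0:ℝ) ≤ a := by
    rw [ha]; exact add_nonneg (Complex.normSq_nonneg _) (Complex.normSq_nonneg _)
  have hlam0 : 0 ≤ lam := le_trans ha0 hla
  -- key identity for ‖T x‖²
  have key : ∀ x : EuclideanSpace ℂ (Fin 2), ‖Matrix.toEuclideanCLM (𝕜 := ℂ) Φ x‖^2 =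
      a * Complex.normSq (x 0) + c * Complex.normSq (x 1)
        + 2 * ((b * (starRingEnd ℂ) (x 0) * x 1)).re := by
    intro x
    rw [key_apply Φ x, ← ha, ← hc, ← hb]
  have normx : ∀ x : EuclideanSpace ℂ (Fin 2),
      ‖x‖^2 = Complex.normSq (x 0) + Complex.normSq (x 1) := normx_apply
  refine le_antisymm (ContinuousLinearMap.opNorm_le_bound _ (Real.sqrt_nonneg _) ?_) ?_
  · intro x
    have hmulsq : Real.sqrt (lam - a) * Real.sqrt (lam - c) = ‖b‖ := by
      rw [← Real.sqrt_mul (by linarith) _, hroot, hnb, ← Complex.sq_norm,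
        Real.sqrt_sq (norm_nonneg b)]
    have hre : (b * (starRingEnd ℂ) (x 0) * x 1).re ≤
        ‖b‖ * (‖x 0‖ * ‖x 1‖) := by
      calc (b * (starRingEnd ℂ) (x 0) * x 1).re
          ≤ ‖b * (starRingEnd ℂ) (x 0) * x 1‖ := Complex.re_le_norm _
        _ = ‖b‖ * (‖x 0‖ * ‖x 1‖) := by
            simp [norm_mul, Complex.norm_conj]; ring
    have e1 : 2 * (‖b‖ * (‖x 0‖ * ‖x 1‖)) ≤
        (lam - a) * (‖x 0‖)^2 + (lam - c) * (‖x 1‖)^2 := by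
      rw [← Real.sq_sqrt (sub_nonneg.2 hla), ← Real.sq_sqrt (sub_nonneg.2 hlc), ← hmulsq]
      nlinarith [sq_nonneg (Real.sqrt (lam - a) * ‖x 0‖
        - Real.sqrt (lam - c) * ‖x 1‖)]
    have h2 : ‖Matrix.toEuclideanCLM (𝕜 := ℂ) Φ x‖^2 ≤ lam * ‖x‖^2 := by
      rw [key x, normx x, ← Complex.sq_norm (x 0), ← Complex.sq_norm (x 1)]
      nlinarith [e1, hre]
    calc ‖Matrix.toEuclideanCLM (𝕜 := ℂ) Φ x‖
        = Real.sqrt (‖Matrix.toEuclideanCLM (𝕜 := ℂ) Φ x‖^2) :=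
          (Real.sqrt_sq (norm_nonneg _)).symm
      _ ≤ Real.sqrt (lam * ‖x‖^2) := Real.sqrt_le_sqrt h2
      _ = Real.sqrt lam * ‖x‖ := by
          rw [Real.sqrt_mul hlam0, Real.sqrt_sq (norm_nonneg _)]
  · by_cases hcase : lam = c
    · -- use the vector (0, 1)
      have hTx : ‖Matrix.toEuclideanCLM (𝕜 := ℂ) Φ
          ((WithLp.equiv 2 (Fin 2 → ℂ)).symm ![0, 1])‖^2 = lam := by
        rw [key _]
        show a * Complex.normSq 0 + c * Complex.normSq 1
          + 2 * ((b * (starRingEnd ℂ) 0 * 1)).re = lam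
        rw [hcase]; simp
      have hxn : ‖((WithLp.equiv 2 (Fin 2 → ℂ)).symm ![0, 1] : EuclideanSpace ℂ (Fin 2))‖ = 1 := by
        have h := normx ((WithLp.equiv 2 (Fin 2 → ℂ)).symm ![0, 1])
        have h' : Complex.normSq (((WithLp.equiv 2 (Fin 2 → ℂ)).symm ![0, 1] :
            EuclideanSpace ℂ (Fin 2)) 0) = 0 := by
          show Complex.normSq 0 = 0; simp
        have h'' : Complex.normSq (((WithLp.equiv 2 (Fin 2 → ℂ)).symm ![0, 1] :
            EuclideanSpace ℂ (Fin 2)) 1) = 1 := by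
          show Complex.normSq 1 = 1; simp
        rw [h', h''] at h
        nlinarith [norm_nonneg ((WithLp.equiv 2 (Fin 2 → ℂ)).symm ![0, 1] :
          EuclideanSpace ℂ (Fin 2))]
      have heq : ‖Matrix.toEuclideanCLM (𝕜 := ℂ) Φ
          ((WithLp.equiv 2 (Fin 2 → ℂ)).symm ![0, 1])‖ = Real.sqrt lam := by
        rw [← hTx, Real.sqrt_sq (norm_nonneg _)]
      calc Real.sqrt lam
          = ‖Matrix.toEuclideanCLM (𝕜 := ℂ) Φ ((WithLp.equiv 2 (Fin 2 → ℂ)).symm ![0, 1])‖ :=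
            heq.symm
        _ ≤ ‖Matrix.toEuclideanCLM (𝕜 := ℂ) Φ‖ *
            ‖((WithLp.equiv 2 (Fin 2 → ℂ)).symm ![0, 1] : EuclideanSpace ℂ (Fin 2))‖ :=
            ContinuousLinearMap.le_opNorm _ _
        _ = ‖Matrix.toEuclideanCLM (𝕜 := ℂ) Φ‖ := by rw [hxn, mul_one]
    · -- use the vector (lam - c, conj b)
      set v : EuclideanSpace ℂ (Fin 2) :=
        (WithLp.equiv 2 (Fin 2 → ℂ)).symm ![((lam - c : ℝ) : ℂ), (starRingEnd ℂ) b] with hv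
      have hv0 : v 0 = ((lam - c : ℝ) : ℂ) := by rw [hv]; rfl
      have hv1 : v 1 = (starRingEnd ℂ) b := by rw [hv]; rfl
      have h1 : Complex.normSq (((lam - c : ℝ) : ℂ)) = (lam - c)^2 := by
        rw [Complex.normSq_ofReal]; ring
      have h2 : Complex.normSq ((starRingEnd ℂ) b) = nb := Complex.normSq_conj b
      have hTx : ‖Matrix.toEuclideanCLM (𝕜 := ℂ) Φ v‖^2 = lam * ‖v‖^2 := by
        rw [key v, normx v, hv0, hv1]
        have h3 : (b * (starRingEnd ℂ) (((lam - c : ℝ) : ℂ)) * (starRingEnd ℂ) b).re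
            = (lam - c) * nb := by
          have hh : b * (starRingEnd ℂ) (((lam - c : ℝ) : ℂ)) * (starRingEnd ℂ) b
              = (((lam - c) * nb : ℝ) : ℂ) := by
            rw [Complex.conj_ofReal]
            push_cast
            rw [hnb, ← Complex.mul_conj]
            ring
          rw [hh, Complex.ofReal_re]
        rw [h1, h2, h3]
        linear_combination (c - lam) * hroot
      have hxpos : 0 < ‖v‖ := by
        have h := normx v
        rw [hv0, hv1, h1, h2] at h
        have ht0 : lam - c ≠ 0 := sub_ne_zero.2 hcase
        have hpos : 0 < ‖v‖^2 := by rw [h]; positivity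
        nlinarith [norm_nonneg v]
      have hTxn : ‖Matrix.toEuclideanCLM (𝕜 := ℂ) Φ v‖ = Real.sqrt lam * ‖v‖ := by
        rw [← Real.sqrt_sq (norm_nonneg (Matrix.toEuclideanCLM (𝕜 := ℂ) Φ v)), hTx,
          Real.sqrt_mul hlam0, Real.sqrt_sq (norm_nonneg v)]
      have hle : Real.sqrt lam * ‖v‖ ≤ ‖Matrix.toEuclideanCLM (𝕜 := ℂ) Φ‖ * ‖v‖ := by
        rw [← hTxn]; exact ContinuousLinearMap.le_opNorm _ _
      exact le_of_mul_le_mul_right hle hxpos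

open ContinuousLinearMap in
/-- The operator norm (induced by the Euclidean norm on `ℂ²`) of a `2 × 2` complex matrix
`Φ` equals `√((φ + √(φ² − 4|ω|²))/2)`, where `φ` is the squared Frobenius norm of `Φ` and
`ω = det Φ`. -/
theorem norm_two_by_two_matrix_eq
    (Φ : Matrix (Fin 2) (Fin 2) ℂ)
    (φ : ℝ) (hφ : φ = ‖Φ 0 0‖ ^ 2 + ‖Φ 0 1‖ ^ 2 +
      ‖Φ 1 0‖ ^ 2 + ‖Φ 1 1‖ ^ 2)
    (ω : ℂ) (hω : ω = Φ 0 0 * Φ 1 1 - Φ 0 1 * Φ 1 0) :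
    ‖Matrix.toEuclideanCLM (𝕜 := ℂ) Φ‖ =
      Real.sqrt ((φ + Real.sqrt (φ ^ 2 - 4 * ‖ω‖ ^ 2)) / 2) := by
  exact norm_two_by_two_matrix_eq_aux Φ φ hφ ω hω
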